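/- Let H be a symmetric positive definite matrix and M a symmetric matrix satisfying (1−τ)H⁻¹ ⪯ M ⪯ (1+τ)H⁻¹ for some τ ≥ 0. Then the operator norm of (I − MH) with respect to the norm ‖·‖_H is at most τ, i.e., for all y, ‖(I − MH)y‖_H ≤ τ‖y‖_H. -/

import Mathlib

open Matrix

private lemma quad_conj {n : ℕ} (A B : Matrix (Fin n) (Fin n) ℝ) (v : Fin n → ℝ) :
    v ⬝ᵥ (Aᵀ * B * A).mulVec v = (A.mulVec v) ⬝ᵥ B.mulVec (A.mulVec v) := by
  rw [← mulVec_mulVec, ← mulVec_mulVec, dotProduct_mulVec, vecMul_transpose,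
    dotProduct_mulVec, dotProduct_mulVec]

private lemma psd_quad {n : ℕ} {A : Matrix (Fin n) (Fin n) ℝ} (hA : A.PosSemidef)
    (v : Fin n → ℝ) : 0 ≤ v ⬝ᵥ A.mulVec v := by simpa using hA.dotProduct_mulVec_nonneg v

/-- If `H` is symmetric positive definite and `M` is symmetric with
`(1−τ)H⁻¹ ⪯ M ⪯ (1+τ)H⁻¹` for some `τ ≥ 0`, then for all `y`,
`‖(I − MH)y‖_H ≤ τ ‖y‖_H`, where `‖x‖_H = √(xᵀ H x)`. -/
theorem opNorm_id_sub_MH_le (n : ℕ) (H M : Matrix (Fin n) (Fin n) ℝ)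
    (hHsymm : H.IsSymm) (hH : H.PosDef) (hMsymm : M.IsSymm)
    (τ : ℝ) (hτ : 0 ≤ τ)
    (hlow : (M - (1 - τ) • H⁻¹).PosSemidef)
    (hup : ((1 + τ) • H⁻¹ - M).PosSemidef) :
    ∀ y : Fin n → ℝ,
      Real.sqrt ((((1 : Matrix (Fin n) (Fin n) ℝ) - M * H).mulVec y) ⬝ᵥ
          H.mulVec (((1 : Matrix (Fin n) (Fin n) ℝ) - M * H).mulVec y)) ≤
        τ * Real.sqrt (y ⬝ᵥ H.mulVec y) := by
  intro y
  have hdet : IsUnit H.det := isUnit_iff_ne_zero.mpr (ne_of_gt hH.det_pos)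
  have hinv2 : H * H⁻¹ = 1 := mul_nonsing_inv H hdet
  set P : Matrix (Fin n) (Fin n) ℝ := M - (1 - τ) • H⁻¹ with hPdef
  -- bound : (2τ)•H⁻¹ - P is PSD
  have hbound : ((2 * τ) • H⁻¹ - P).PosSemidef := by
    have : (2 * τ) • H⁻¹ - P = (1 + τ) • H⁻¹ - M := by
      rw [hPdef]; module
    rw [this]; exact hup
  -- H*P = H*M - (1-τ)•1
  have hHP : H * P = H * M - (1 - τ) • 1 := by
    rw [hPdef, Matrix.mul_sub, Matrix.mul_smul, hinv2]
  -- quadratic bound : v ⬝ (H*P*H) v ≤ 2τ * v ⬝ H v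
  have hHPH : ∀ v : Fin n → ℝ,
      v ⬝ᵥ (H * P * H).mulVec v ≤ 2 * τ * (v ⬝ᵥ H.mulVec v) := by
    intro v
    have h0 := psd_quad hbound (H.mulVec v)
    have e1 : (H.mulVec v) ⬝ᵥ P.mulVec (H.mulVec v) = v ⬝ᵥ (H * P * H).mulVec v := by
      rw [← quad_conj H P v, hHsymm.eq]
    have e2 : (H.mulVec v) ⬝ᵥ H⁻¹.mulVec (H.mulVec v) = v ⬝ᵥ H.mulVec v := by
      rw [← quad_conj H H⁻¹ v, hHsymm.eq]
      congr 1
      rw [Matrix.mul_assoc, nonsing_inv_mul H hdet, Matrix.mul_one]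
    rw [Matrix.sub_mulVec, dotProduct_sub, smul_mulVec, dotProduct_smul,
      e1, e2, smul_eq_mul] at h0
    linarith
  -- P is PSD, write P = Lᵀ * L
  open scoped MatrixOrder Matrix.Norms.L2Operator in
  obtain ⟨L, hL⟩ := CStarAlgebra.nonneg_iff_eq_star_mul_self.mp hlow.nonneg
  rw [star_eq_conjTranspose, conjTranspose_eq_transpose_of_trivial] at hL
  have hLP : P = Lᵀ * L := hL
  -- A := L * H * Lᵀ
  set A : Matrix (Fin n) (Fin n) ℝ := L * H * Lᵀ with hAdef
  have hAsymm : Aᵀ = A := by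
    rw [hAdef, Matrix.transpose_mul, Matrix.transpose_mul, transpose_transpose,
      hHsymm.eq, Matrix.mul_assoc]
  -- key : z ⬝ (P*H*P) z ≤ 2τ * z ⬝ P z
  have key : ∀ z : Fin n → ℝ,
      z ⬝ᵥ (P * H * P).mulVec z ≤ 2 * τ * (z ⬝ᵥ P.mulVec z) := by
    intro z
    set w : Fin n → ℝ := L.mulVec z with hw
    have hPHP : P * H * P = Lᵀ * A * L := by
      rw [hLP, hAdef]; noncomm_ring
    have e1 : z ⬝ᵥ (P * H * P).mulVec z = w ⬝ᵥ A.mulVec w := by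
      rw [hPHP, quad_conj]
    have e2 : z ⬝ᵥ P.mulVec z = w ⬝ᵥ w := by
      have := quad_conj L 1 z
      rw [Matrix.mul_one] at this
      rw [hLP, this, one_mulVec]
    -- s := w ⬝ A w ≥ 0
    have hs0 : 0 ≤ w ⬝ᵥ A.mulVec w := by
      have := quad_conj Lᵀ H w
      rw [transpose_transpose] at this
      rw [hAdef, this]
      exact psd_quad hH.posSemidef _
    -- Cauchy-Schwarz : (w ⬝ A w)^2 ≤ (w ⬝ w) * (Aw ⬝ Aw)
    have hcs : (w ⬝ᵥ A.mulVec w) ^ 2 ≤ (w ⬝ᵥ w) * ((A.mulVec w) ⬝ᵥ (A.mulVec w)) := by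
      have := Finset.sum_mul_sq_le_sq_mul_sq Finset.univ w (A.mulVec w)
      simpa [dotProduct, pow_two] using this
    -- Aw ⬝ Aw = w ⬝ A² w ≤ 2τ * w ⬝ A w
    have hA2 : (A.mulVec w) ⬝ᵥ (A.mulVec w) ≤ 2 * τ * (w ⬝ᵥ A.mulVec w) := by
      have e3 : (A.mulVec w) ⬝ᵥ (A.mulVec w) = w ⬝ᵥ (A * A).mulVec w := by
        have := quad_conj A 1 w
        rw [Matrix.mul_one, hAsymm] at this
        rw [this, one_mulVec]
      have e4 : A * A = L * (H * P * H) * Lᵀ := by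
        rw [hAdef, hLP]; noncomm_ring
      have e5 : w ⬝ᵥ (A * A).mulVec w = (Lᵀ.mulVec w) ⬝ᵥ (H * P * H).mulVec (Lᵀ.mulVec w) := by
        have := quad_conj Lᵀ (H * P * H) w
        rw [transpose_transpose] at this
        rw [e4, this]
      have e6 : (Lᵀ.mulVec w) ⬝ᵥ H.mulVec (Lᵀ.mulVec w) = w ⬝ᵥ A.mulVec w := by
        have := quad_conj Lᵀ H w
        rw [transpose_transpose] at this
        rw [hAdef, this]
      calc (A.mulVec w) ⬝ᵥ (A.mulVec w) = (Lᵀ.mulVec w) ⬝ᵥ (H * P * H).mulVec (Lᵀ.mulVec w) := by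
            rw [e3, e5]
        _ ≤ 2 * τ * ((Lᵀ.mulVec w) ⬝ᵥ H.mulVec (Lᵀ.mulVec w)) := hHPH _
        _ = 2 * τ * (w ⬝ᵥ A.mulVec w) := by rw [e6]
    have hww : 0 ≤ w ⬝ᵥ w := by
      simpa [dotProduct] using Finset.sum_nonneg fun i _ => mul_self_nonneg (w i)
    rw [e1, e2]
    have h1 : (w ⬝ᵥ A.mulVec w) ^ 2 ≤ (w ⬝ᵥ w) * (2 * τ * (w ⬝ᵥ A.mulVec w)) :=
      hcs.trans (mul_le_mul_of_nonneg_left hA2 hww)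
    rcases eq_or_lt_of_le hs0 with h | h
    · rw [← h]
      positivity
    · have h2 : (w ⬝ᵥ A.mulVec w) * (w ⬝ᵥ A.mulVec w)
          ≤ (2 * τ * (w ⬝ᵥ w)) * (w ⬝ᵥ A.mulVec w) := by nlinarith [h1]
      exact le_of_mul_le_mul_right h2 h
  -- the matrix identity
  set z : Fin n → ℝ := H.mulVec y with hz
  have hq : ((1 : Matrix (Fin n) (Fin n) ℝ) - M * H).mulVec y ⬝ᵥ
      H.mulVec (((1 : Matrix (Fin n) (Fin n) ℝ) - M * H).mulVec y)
      = y ⬝ᵥ ((1 - H * M) * H * (1 - M * H)).mulVec y := by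
    have ht : ((1 : Matrix (Fin n) (Fin n) ℝ) - M * H)ᵀ = 1 - H * M := by
      rw [Matrix.transpose_sub, Matrix.transpose_one, Matrix.transpose_mul,
        hHsymm.eq, hMsymm.eq]
    rw [← ht, quad_conj]
  -- identity : (1 - H*M) * H * (1 - M*H) = τ²•H - ((2τ)•(H*P*H) - (H*P)*(H*P)*H)
  have idt : (1 - H * M) * H * (1 - M * H)
      = τ ^ 2 • H - ((2 * τ) • (H * P * H) - (H * P) * (H * P) * H) := by
    have poly : (1 - H * M) * (1 - H * M) * H
        = τ ^ 2 • H - ((2 * τ) • ((H * M - (1 - τ) • 1) * H)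
          - (H * M - (1 - τ) • 1) * (H * M - (1 - τ) • 1) * H) := by
      simp only [sub_mul, mul_sub, mul_one, one_mul, smul_mul_assoc, mul_smul_comm,
        smul_smul, Matrix.mul_assoc]
      module
    have step : (1 - H * M) * H * (1 - M * H) = (1 - H * M) * (1 - H * M) * H := by
      rw [Matrix.mul_assoc, Matrix.mul_assoc]
      congr 1
      rw [Matrix.mul_sub, Matrix.mul_one, Matrix.sub_mul, Matrix.one_mul,
        ← Matrix.mul_assoc]
    rw [step, hHP]
    exact poly
  -- assemble
  have hineq : y ⬝ᵥ ((1 - H * M) * H * (1 - M * H)).mulVec y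
      ≤ τ ^ 2 * (y ⬝ᵥ H.mulVec y) := by
    have h2 : (H * P) * (H * P) * H = Hᵀ * (P * H * P) * H := by
      rw [hHsymm.eq]; noncomm_ring
    have h3 : H * P * H = Hᵀ * P * H := by rw [hHsymm.eq]
    have hkey := key z
    have e7 : z ⬝ᵥ (P * H * P).mulVec z = y ⬝ᵥ ((H * P) * (H * P) * H).mulVec y := by
      rw [h2, quad_conj, ← hz]
    have e8 : z ⬝ᵥ P.mulVec z = y ⬝ᵥ (H * P * H).mulVec y := by
      rw [h3, quad_conj, ← hz]
    rw [e7, e8] at hkey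
    rw [idt, Matrix.sub_mulVec, dotProduct_sub, Matrix.sub_mulVec, dotProduct_sub,
      smul_mulVec, dotProduct_smul, smul_mulVec, dotProduct_smul,
      smul_eq_mul, smul_eq_mul]
    linarith
  rw [hq]
  have hr : 0 ≤ y ⬝ᵥ H.mulVec y := psd_quad hH.posSemidef y
  calc Real.sqrt (y ⬝ᵥ ((1 - H * M) * H * (1 - M * H)).mulVec y)
      ≤ Real.sqrt (τ ^ 2 * (y ⬝ᵥ H.mulVec y)) := Real.sqrt_le_sqrt hineq
    _ = τ * Real.sqrt (y ⬝ᵥ H.mulVec y) := by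
        rw [Real.sqrt_mul (sq_nonneg τ), Real.sqrt_sq hτ]
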